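/- arXiv:2302.13180 — 2 statements merged into one kernel-verified Lean document; each statement's English description precedes it below -/
import Mathlib

section
/- Let a, b be distinct nonzero real numbers, let σ₁, σ₂ be positive integers, and let i, j be nonnegative integers with i + j ≤ σ₁ + σ₂ − 1. Then for every real x with x ≠ −a and x ≠ −b: x^{i+j} / ((x+a)^{σ₁} (x+b)^{σ₂}) = Σ_{k=1}^{σ₁} A_k (x+a)^{−k} + Σ_{k=1}^{σ₂} B_k (x+b)^{−k}, where A_k = Σ_{l=0}^{σ₁−k} [C(σ₁−k, l)/(σ₁−k)!] (i+j−σ₁+k+l+1)_{σ₁−k−l} (σ₂)_l (−1)^{l} (−a)^{i+j−σ₁+k+l} (b−a)^{−σ₂−l} and B_k = Σ_{l=0}^{σ₂−k} [C(σ₂−k, l)/(σ₂−k)!] (i+j−σ₂+k+l+1)_{σ₂−k−l} (σ₁)_l (−1)^{l} (−b)^{i+j−σ₂+k+l} (a−b)^{−σ₁−l}. -/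
open Finset

/-- Partial fraction coefficient `A_k` (for the pole at `-a`). -/
noncomputable def pfA (i j σ1 σ2 k : ℕ) (a b : ℝ) : ℝ :=
  ∑ l ∈ Finset.range (σ1 - k + 1),
    ((σ1 - k).choose l : ℝ) / ((σ1 - k).factorial : ℝ) *
      (ascPochhammer ℝ (σ1 - k - l)).eval ((i : ℝ) + j - σ1 + k + l + 1) *
      (ascPochhammer ℝ l).eval (σ2 : ℝ) * (-1 : ℝ) ^ l *
      (-a) ^ ((i : ℤ) + j - σ1 + k + l) * (b - a) ^ (-(σ2 : ℤ) - l)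

/-- Partial fraction coefficient `B_k` (for the pole at `-b`). -/
noncomputable def pfB (i j σ1 σ2 k : ℕ) (a b : ℝ) : ℝ :=
  ∑ l ∈ Finset.range (σ2 - k + 1),
    ((σ2 - k).choose l : ℝ) / ((σ2 - k).factorial : ℝ) *
      (ascPochhammer ℝ (σ2 - k - l)).eval ((i : ℝ) + j - σ2 + k + l + 1) *
      (ascPochhammer ℝ l).eval (σ1 : ℝ) * (-1 : ℝ) ^ l *
      (-b) ^ ((i : ℤ) + j - σ2 + k + l) * (a - b) ^ (-(σ1 : ℤ) - l)

section PFAux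
open Polynomial

theorem descPoch_neg (q : ℝ) (l : ℕ) :
    (descPochhammer ℤ l).smeval (-q) = (-1)^l * (ascPochhammer ℝ l).eval q := by
  have h := Polynomial.ascPochhammer_smeval_neg_eq_descPochhammer (-q) l
  rw [neg_neg, Polynomial.ascPochhammer_smeval_eq_eval] at h
  rw [h, Units.smul_def, Int.coe_negOnePow_natCast, zsmul_eq_mul]
  push_cast
  rw [← mul_assoc, ← mul_pow]
  simp

theorem ringChoose_neg (q l : ℕ) :
    (Ring.choose (-(q:ℝ)) l) = (-1)^l * (ascPochhammer ℝ l).eval (q:ℝ) / l.factorial := by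
  have h := (Ring.descPochhammer_eq_factorial_smul_choose (R := ℝ) (-(q:ℝ)) l)
  rw [descPoch_neg] at h
  have hl : (l.factorial : ℝ) ≠ 0 := Nat.cast_ne_zero.mpr l.factorial_ne_zero
  rw [nsmul_eq_mul] at h
  rw [eq_div_iff hl, mul_comm, ← h]

theorem key_sum (σ2 t : ℕ) :
    ∑ l ∈ Finset.range (t+1), Ring.choose (-(σ2:ℝ)) l * (σ2.choose (t - l) : ℝ) =
      if t = 0 then 1 else 0 := by
  have h := Ring.add_choose_eq (r := -(σ2:ℝ)) (s := (σ2:ℝ)) t (Commute.all _ _)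
  rw [neg_add_cancel] at h
  rw [show (0:ℝ) = ((0:ℕ):ℝ) by norm_num, Ring.choose_natCast,
    Finset.Nat.sum_antidiagonal_eq_sum_range_succ_mk] at h
  simp only [Ring.choose_natCast] at h
  rw [← h]
  cases t <;> simp [Nat.choose_eq_zero_of_lt]

theorem poch_eval_nat (s N : ℕ) :
    (ascPochhammer ℝ s).eval ((N:ℝ)+1) = ((N+s).factorial : ℝ) / (N.factorial : ℝ) := by
  have hN : (N.factorial : ℝ) ≠ 0 := Nat.cast_ne_zero.mpr N.factorial_ne_zero
  induction s with
  | zero => simp [div_self hN]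
  | succ s ih =>
    rw [ascPochhammer_succ_eval, ih, ← add_assoc, Nat.factorial_succ]
    field_simp
    push_cast
    ring


noncomputable def Gc (σ2 l : ℕ) (c : ℝ) : ℝ :=
  (-1)^l * (ascPochhammer ℝ l).eval (σ2:ℝ) / (l.factorial : ℝ) * c ^ (-(σ2:ℤ) - (l:ℤ))

noncomputable def gpoly (σ1 σ2 : ℕ) (c : ℝ) : Polynomial ℝ :=
  ∑ l ∈ Finset.range σ1, C (Gc σ2 l c) * X ^ l


theorem coeff_gpoly (σ1 σ2 : ℕ) (c : ℝ) (d : ℕ) :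
    (gpoly σ1 σ2 c).coeff d = if d < σ1 then Gc σ2 d c else 0 := by
  rw [gpoly, finset_sum_coeff]
  simp only [coeff_C_mul, coeff_X_pow]
  by_cases h : d < σ1
  · rw [Finset.sum_eq_single_of_mem d (Finset.mem_range.mpr h)
      (by intro b _ hb; simp [Ne.symm hb])]
    simp [h]
  · rw [if_neg h, Finset.sum_eq_zero]
    intro b hb
    have : d ≠ b := by rw [Finset.mem_range] at hb; omega
    simp [this]


theorem coeff_g_mul (σ1 σ2 : ℕ) (c : ℝ) (hc : c ≠ 0) (t : ℕ) (ht : t < σ1) :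
    (gpoly σ1 σ2 c * (X + C c)^σ2).coeff t = if t = 0 then 1 else 0 := by
  rw [coeff_mul, Finset.Nat.sum_antidiagonal_eq_sum_range_succ_mk]
  have step : ∀ l ∈ Finset.range (t+1),
      (gpoly σ1 σ2 c).coeff l * ((X + C c)^σ2).coeff (t - l) =
        c ^ (-(t:ℤ)) * (Ring.choose (-(σ2:ℝ)) l * (σ2.choose (t-l) : ℝ)) := by
    intro l hl
    rw [Finset.mem_range] at hl
    rw [coeff_gpoly, if_pos (by omega), coeff_X_add_C_pow, ringChoose_neg, Gc]
    by_cases h : t - l ≤ σ2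
    · have hz : c ^ (σ2 - (t-l)) = c ^ ((σ2 - (t-l) : ℕ) : ℤ) := (zpow_natCast c _).symm
      have hpow : c ^ (-(σ2:ℤ) - (l:ℤ)) * c ^ ((σ2 - (t-l) : ℕ) : ℤ) = c ^ (-(t:ℤ)) := by
        rw [← zpow_add₀ hc]
        congr 1
        omega
      rw [hz, ← hpow]
      ring
    · rw [Nat.choose_eq_zero_of_lt (by omega)]
      simp
  rw [Finset.sum_congr rfl step, ← Finset.mul_sum, key_sum]
  by_cases h : t = 0 <;> simp [h]


noncomputable def fpoly (n : ℕ) (a : ℝ) : Polynomial ℝ := (X + C (-a))^n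


theorem shifted_dvd (σ1 σ2 n : ℕ) (a c : ℝ) (hc : c ≠ 0) :
    (X:Polynomial ℝ)^σ1 ∣ fpoly n a - (X + C c)^σ2 *
      ∑ m ∈ Finset.range σ1, C ((fpoly n a * gpoly σ1 σ2 c).coeff m) * X ^ m := by
  set f := fpoly n a
  set g := gpoly σ1 σ2 c
  set h := (X + C c)^σ2
  set T := ∑ m ∈ Finset.range σ1, C ((f * g).coeff m) * X ^ m with hT
  have h1 : (X:Polynomial ℝ)^σ1 ∣ g * h - 1 := by
    rw [X_pow_dvd_iff]
    intro d hd
    rw [coeff_sub, coeff_g_mul σ1 σ2 c hc d hd, coeff_one]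
    simp
  have h2 : (X:Polynomial ℝ)^σ1 ∣ f * g - T := by
    rw [X_pow_dvd_iff]
    intro d hd
    rw [coeff_sub, hT, finset_sum_coeff]
    simp only [coeff_C_mul, coeff_X_pow]
    rw [Finset.sum_eq_single_of_mem d (Finset.mem_range.mpr hd)
      (by intro b _ hb; simp [Ne.symm hb])]
    simp
  have key : f - h * T = (-f) * (g * h - 1) + h * (f * g - T) := by ring
  rw [key]
  exact dvd_add (h1.mul_left _) (h2.mul_left _)

theorem side_dvd (σ1 σ2 n : ℕ) (a b : ℝ) (hab : b - a ≠ 0) :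
    (X + C a)^σ1 ∣ (X:Polynomial ℝ)^n - (X + C b)^σ2 *
      ∑ m ∈ Finset.range σ1, C ((fpoly n a * gpoly σ1 σ2 (b - a)).coeff m) * (X + C a) ^ m := by
  have hd := shifted_dvd σ1 σ2 n a (b - a) hab
  have hmap := map_dvd (compRingHom (X + C a)) hd
  simp only [coe_compRingHom_apply] at hmap
  simp only [fpoly, sub_comp, mul_comp, pow_comp, add_comp, X_comp, C_comp] at hmap
  have e1 : (X + C a + C (-a) : Polynomial ℝ) = X := by
    rw [map_neg]; ring
  have e2 : (X + C a + C (b - a) : Polynomial ℝ) = X + C b := by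
    rw [add_assoc, ← C_add, add_sub_cancel]
  have e3 : (∑ m ∈ Finset.range σ1, C (((X + C (-a))^n * gpoly σ1 σ2 (b - a)).coeff m) * X ^ m).comp
      (X + C a) = ∑ m ∈ Finset.range σ1,
        C (((X + C (-a))^n * gpoly σ1 σ2 (b - a)).coeff m) * (X + C a) ^ m := by
    rw [Polynomial.comp, Polynomial.eval₂_finset_sum]
    refine Finset.sum_congr rfl fun m _ => ?_
    rw [← Polynomial.comp, mul_comp, C_comp, pow_comp, X_comp]
  rw [e1, e2, e3] at hmap
  rw [fpoly]
  exact hmap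


theorem coeff_fg (n σ1 σ2 : ℕ) (a c : ℝ) (m : ℕ) (hm : m < σ1) :
    (fpoly n a * gpoly σ1 σ2 c).coeff m =
      ∑ l ∈ Finset.range (m+1), (n.choose (m-l) : ℝ) * (-a)^(n - (m-l)) * Gc σ2 l c := by
  rw [coeff_mul, Finset.Nat.sum_antidiagonal_eq_sum_range_succ_mk, ← Finset.sum_range_reflect]
  refine Finset.sum_congr rfl fun l hl => ?_
  rw [Finset.mem_range] at hl
  have h1 : m + 1 - 1 - l = m - l := by omega
  have h2 : m - (m - l) = l := by omega
  rw [h1, h2, fpoly, coeff_X_add_C_pow, coeff_gpoly, if_pos (by omega)]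
  ring


theorem per_term (n m l σ2 : ℕ) (hlm : l ≤ m) (a c : ℝ) :
    (m.choose l : ℝ) / (m.factorial : ℝ) *
      (ascPochhammer ℝ (m - l)).eval ((n:ℝ) - (m:ℝ) + (l:ℝ) + 1) *
      (ascPochhammer ℝ l).eval (σ2:ℝ) * (-1:ℝ)^l *
      (-a) ^ ((n:ℤ) - (m:ℤ) + (l:ℤ)) * c ^ (-(σ2:ℤ) - (l:ℤ))
    = (n.choose (m-l) : ℝ) * (-a)^(n - (m-l)) * Gc σ2 l c := by
  by_cases hcase : m - l ≤ n
  · have harg : (n:ℝ) - (m:ℝ) + (l:ℝ) + 1 = ((n - (m - l) : ℕ):ℝ) + 1 := by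
      rw [Nat.cast_sub hcase, Nat.cast_sub hlm]; ring
    have hzp : (-a) ^ ((n:ℤ) - (m:ℤ) + (l:ℤ)) = (-a) ^ (n - (m - l) : ℕ) := by
      rw [show (n:ℤ) - (m:ℤ) + (l:ℤ) = ((n - (m - l) : ℕ):ℤ) by omega, zpow_natCast]
    rw [harg, hzp, poch_eval_nat, Nat.sub_add_cancel hcase, Gc,
      Nat.cast_choose ℝ hlm, Nat.cast_choose ℝ hcase]
    have f1 : ((m-l).factorial : ℝ) ≠ 0 := Nat.cast_ne_zero.mpr (Nat.factorial_ne_zero _)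
    have f2 : (l.factorial : ℝ) ≠ 0 := Nat.cast_ne_zero.mpr (Nat.factorial_ne_zero _)
    have f3 : ((n-(m-l)).factorial : ℝ) ≠ 0 := Nat.cast_ne_zero.mpr (Nat.factorial_ne_zero _)
    have f4 : (m.factorial : ℝ) ≠ 0 := Nat.cast_ne_zero.mpr (Nat.factorial_ne_zero _)
    have f5 : (n.factorial : ℝ) ≠ 0 := Nat.cast_ne_zero.mpr (Nat.factorial_ne_zero _)
    field_simp
  · have hw : (m - l - n - 1 : ℕ) < m - l := by omega
    have harg : (n:ℝ) - (m:ℝ) + (l:ℝ) + 1 = -((m - l - n - 1 : ℕ):ℝ) := by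
      have hz : ((m - l - n - 1 : ℕ):ℤ) = (m:ℤ) - l - n - 1 := by omega
      have : ((m - l - n - 1 : ℕ):ℝ) = (m:ℝ) - l - n - 1 := by exact_mod_cast hz
      rw [this]; ring
    rw [harg, ascPochhammer_eval_neg_coe_nat_of_lt hw,
      Nat.choose_eq_zero_of_lt (by omega : n < m - l)]
    simp


end PFAux

section PFMain
open Polynomial

theorem pfA_eq (i j σ1 σ2 : ℕ) (a b : ℝ) (k : ℕ) (hk1 : 1 ≤ k) (hk2 : k ≤ σ1) :
    pfA i j σ1 σ2 k a b = (fpoly (i+j) a * gpoly σ1 σ2 (b-a)).coeff (σ1 - k) := by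
  rw [coeff_fg (i+j) σ1 σ2 a (b-a) (σ1-k) (by omega), pfA]
  refine Finset.sum_congr rfl fun l hl => ?_
  rw [Finset.mem_range] at hl
  have hlm : l ≤ σ1 - k := by omega
  have hc1 : (i : ℝ) + j - σ1 + k + l + 1 =
      ((i+j : ℕ):ℝ) - ((σ1 - k : ℕ):ℝ) + (l:ℝ) + 1 := by
    rw [Nat.cast_sub hk2]; push_cast; ring
  have hc2 : (i : ℤ) + j - σ1 + k + l = ((i+j:ℕ):ℤ) - ((σ1-k:ℕ):ℤ) + (l:ℤ) := by omega
  rw [hc1, hc2, per_term (i+j) (σ1-k) l σ2 hlm a (b-a)]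


theorem pfB_eq_pfA (i j σ1 σ2 k : ℕ) (a b : ℝ) :
    pfB i j σ1 σ2 k a b = pfA i j σ2 σ1 k b a := rfl


end PFMain

open Polynomial in
theorem partial_fraction_expansion (a b : ℝ) (ha : a ≠ 0) (hb : b ≠ 0) (hab : a ≠ b)
    (σ1 σ2 : ℕ) (hσ1 : 0 < σ1) (hσ2 : 0 < σ2) (i j : ℕ) (hij : i + j ≤ σ1 + σ2 - 1)
    (x : ℝ) (hxa : x ≠ -a) (hxb : x ≠ -b) :
    x ^ (i + j) / ((x + a) ^ σ1 * (x + b) ^ σ2) =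
      (∑ k ∈ Finset.Icc 1 σ1, pfA i j σ1 σ2 k a b * (x + a) ^ (-(k : ℤ))) +
        ∑ k ∈ Finset.Icc 1 σ2, pfB i j σ1 σ2 k a b * (x + b) ^ (-(k : ℤ)) := by
  have hba : b - a ≠ 0 := sub_ne_zero.mpr (Ne.symm hab)
  have hab' : a - b ≠ 0 := sub_ne_zero.mpr hab
  set n := i + j with hn
  -- polynomial sums
  set SA : Polynomial ℝ := ∑ k ∈ Finset.Icc 1 σ1, C (pfA i j σ1 σ2 k a b) * (X + C a) ^ (σ1 - k)
    with hSA
  set SB : Polynomial ℝ := ∑ k ∈ Finset.Icc 1 σ2, C (pfB i j σ1 σ2 k a b) * (X + C b) ^ (σ2 - k)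
    with hSB
  have hSA' : SA = ∑ m ∈ Finset.range σ1,
      C ((fpoly n a * gpoly σ1 σ2 (b-a)).coeff m) * (X + C a) ^ m := by
    rw [hSA]
    refine Finset.sum_nbij' (fun k => σ1 - k) (fun m => σ1 - m) ?_ ?_ ?_ ?_ ?_
    · intro k hk; rw [Finset.mem_Icc] at hk; rw [Finset.mem_range]; omega
    · intro m hm; rw [Finset.mem_range] at hm; rw [Finset.mem_Icc]; omega
    · intro k hk; rw [Finset.mem_Icc] at hk; omega
    · intro m hm; rw [Finset.mem_range] at hm; omega
    · intro k hk; rw [Finset.mem_Icc] at hk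
      rw [pfA_eq i j σ1 σ2 a b k hk.1 hk.2, hn]
  have hSB' : SB = ∑ m ∈ Finset.range σ2,
      C ((fpoly n b * gpoly σ2 σ1 (a-b)).coeff m) * (X + C b) ^ m := by
    rw [hSB]
    refine Finset.sum_nbij' (fun k => σ2 - k) (fun m => σ2 - m) ?_ ?_ ?_ ?_ ?_
    · intro k hk; rw [Finset.mem_Icc] at hk; rw [Finset.mem_range]; omega
    · intro m hm; rw [Finset.mem_range] at hm; rw [Finset.mem_Icc]; omega
    · intro k hk; rw [Finset.mem_Icc] at hk; omega
    · intro m hm; rw [Finset.mem_range] at hm; omega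
    · intro k hk; rw [Finset.mem_Icc] at hk
      rw [pfB_eq_pfA, pfA_eq i j σ2 σ1 b a k hk.1 hk.2, hn]
  set D : Polynomial ℝ := (X:Polynomial ℝ)^n - (X + C b)^σ2 * SA - (X + C a)^σ1 * SB with hD
  have hdvdA : (X + C a)^σ1 ∣ D := by
    rw [hD, hSA']
    exact dvd_sub (side_dvd σ1 σ2 n a b hba) (dvd_mul_right _ _)
  have hdvdB : (X + C b)^σ2 ∣ D := by
    have hre : D = ((X:Polynomial ℝ)^n - (X + C a)^σ1 * SB) - (X + C b)^σ2 * SA := by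
      rw [hD]; ring
    rw [hre, hSB']
    exact dvd_sub (side_dvd σ2 σ1 n b a hab') (dvd_mul_right _ _)
  have hcop : IsCoprime ((X + C a : Polynomial ℝ)^σ1) ((X + C b)^σ2) := by
    apply IsCoprime.pow
    refine ⟨-C ((b-a)⁻¹), C ((b-a)⁻¹), ?_⟩
    have h1 : (C ((b-a)⁻¹) : Polynomial ℝ) * ((X + C b) - (X + C a)) = 1 := by
      rw [show ((X + C b) - (X + C a) : Polynomial ℝ) = C (b - a) by rw [C_sub]; ring,
        ← C_mul, inv_mul_cancel₀ hba, C_1]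
    linear_combination h1
  have hdvd : (X + C a : Polynomial ℝ)^σ1 * (X + C b)^σ2 ∣ D := hcop.mul_dvd hdvdA hdvdB
  have hXa : (X + C a : Polynomial ℝ).natDegree = 1 := natDegree_X_add_C a
  have hXb : (X + C b : Polynomial ℝ).natDegree = 1 := natDegree_X_add_C b
  have hDdeg : D.natDegree ≤ σ1 + σ2 - 1 := by
    rw [hD]
    refine le_trans (natDegree_sub_le _ _) (max_le (le_trans (natDegree_sub_le _ _)
      (max_le ?_ ?_)) ?_)
    · rw [natDegree_X_pow]; omega
    · refine le_trans (natDegree_mul_le) ?_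
      have h1 : ((X + C b : Polynomial ℝ)^σ2).natDegree ≤ σ2 :=
        le_trans (natDegree_pow_le) (by rw [hXb]; omega)
      have h2 : SA.natDegree ≤ σ1 - 1 := by
        rw [hSA]
        refine natDegree_sum_le_of_forall_le _ _ fun k hk => ?_
        rw [Finset.mem_Icc] at hk
        refine le_trans (natDegree_mul_le) ?_
        have := natDegree_pow_le (p := (X + C a : Polynomial ℝ)) (n := σ1 - k)
        rw [hXa] at this
        simp only [natDegree_C]
        omega
      omega
    · refine le_trans (natDegree_mul_le) ?_
      have h1 : ((X + C a : Polynomial ℝ)^σ1).natDegree ≤ σ1 :=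
        le_trans (natDegree_pow_le) (by rw [hXa]; omega)
      have h2 : SB.natDegree ≤ σ2 - 1 := by
        rw [hSB]
        refine natDegree_sum_le_of_forall_le _ _ fun k hk => ?_
        rw [Finset.mem_Icc] at hk
        refine le_trans (natDegree_mul_le) ?_
        have := natDegree_pow_le (p := (X + C b : Polynomial ℝ)) (n := σ2 - k)
        rw [hXb] at this
        simp only [natDegree_C]
        omega
      omega
  have hD0 : D = 0 := by
    by_contra hne
    have hdeg := Polynomial.natDegree_le_of_dvd hdvd hne
    have hmul : ((X + C a : Polynomial ℝ)^σ1 * (X + C b)^σ2).natDegree = σ1 + σ2 := by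
      rw [natDegree_mul (pow_ne_zero _ (X_add_C_ne_zero a)) (pow_ne_zero _ (X_add_C_ne_zero b)),
        natDegree_pow, natDegree_pow, hXa, hXb]
      ring
    omega
  -- evaluate at x
  have hxa' : x + a ≠ 0 := fun h => hxa (by linarith)
  have hxb' : x + b ≠ 0 := fun h => hxb (by linarith)
  have heval := congrArg (Polynomial.eval x) hD0
  rw [hD] at heval
  simp only [eval_sub, eval_mul, eval_pow, eval_add, eval_X, eval_C, eval_zero, hSA, hSB,
    eval_finset_sum, eval_mul, eval_pow, eval_add, eval_X, eval_C] at heval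
  have hx : x ^ n = (x + b)^σ2 * (∑ k ∈ Finset.Icc 1 σ1, pfA i j σ1 σ2 k a b * (x + a)^(σ1 - k))
      + (x + a)^σ1 * (∑ k ∈ Finset.Icc 1 σ2, pfB i j σ1 σ2 k a b * (x + b)^(σ2 - k)) := by
    linarith [heval]
  rw [div_eq_iff (mul_ne_zero (pow_ne_zero _ hxa') (pow_ne_zero _ hxb')), add_mul,
    Finset.sum_mul, Finset.sum_mul, hx]
  congr 1
  · rw [Finset.mul_sum]
    refine Finset.sum_congr rfl fun k hk => ?_
    rw [Finset.mem_Icc] at hk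
    have hp : (x + a) ^ (-(k:ℤ)) * (x + a) ^ σ1 = (x + a) ^ (σ1 - k : ℕ) := by
      rw [← zpow_natCast (x+a) σ1, ← zpow_add₀ hxa', ← zpow_natCast (x+a) (σ1 - k)]
      congr 1
      omega
    symm
    calc pfA i j σ1 σ2 k a b * (x + a) ^ (-(k:ℤ)) * ((x + a) ^ σ1 * (x + b) ^ σ2)
        = ((x + a) ^ (-(k:ℤ)) * (x + a) ^ σ1) * (pfA i j σ1 σ2 k a b * (x + b) ^ σ2) := by ring
      _ = (x + b) ^ σ2 * (pfA i j σ1 σ2 k a b * (x + a) ^ (σ1 - k : ℕ)) := by rw [hp]; ring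
  · rw [Finset.mul_sum]
    refine Finset.sum_congr rfl fun k hk => ?_
    rw [Finset.mem_Icc] at hk
    have hp : (x + b) ^ (-(k:ℤ)) * (x + b) ^ σ2 = (x + b) ^ (σ2 - k : ℕ) := by
      rw [← zpow_natCast (x+b) σ2, ← zpow_add₀ hxb', ← zpow_natCast (x+b) (σ2 - k)]
      congr 1
      omega
    symm
    calc pfB i j σ1 σ2 k a b * (x + b) ^ (-(k:ℤ)) * ((x + a) ^ σ1 * (x + b) ^ σ2)
        = ((x + b) ^ (-(k:ℤ)) * (x + b) ^ σ2) * (pfB i j σ1 σ2 k a b * (x + a) ^ σ1) := by ring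
      _ = (x + a) ^ σ1 * (pfB i j σ1 σ2 k a b * (x + b) ^ (σ2 - k : ℕ)) := by rw [hp]; ring
end

section
/- Fix real parameters α > 0, β > 0 with α + β < 1, γ̄ > 0, γ_th > 0, and a positive integer m. Then the exponential average of the asymptotic outage probability of the squared Rician shadowed distribution satisfies: ∫₀^∞ (γ_th (1 + K_x)/γ̄_x) · (m/(m + K_x))^{m} e^{−x} dx = (γ_th/(α γ̄)) Σ_{j=0}^{m−1} C(m−1, j) ((1−β−α)/α)^{m−1−j} · Γ(1+j) · U(m, m−j, 1/α − β(m−1)/(mα) − 1), where Γ(1+j)·U(m, m−j, z) is characterized for z > 0 by Γ(1+j)·U(m, m−j, z) = ∫₀^∞ x^{j} e^{−x} (x + z)^{−m} dx (the integral representation of Tricomi's confluent hypergeometric function). -/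
open MeasureTheory Finset

theorem fSOSF_asymptotic_outage (α β γbar γth : ℝ) (m : ℕ) (hm : 0 < m)
    (hα : 0 < α) (hβ : 0 < β) (hαβ : α + β < 1) (hγbar : 0 < γbar) (hγth : 0 < γth) :
    (∫ x in Set.Ioi (0 : ℝ),
        (γth * (1 + β / (1 - β - α * (1 - x))) / (γbar * (1 - α * (1 - x)))) *
          ((m : ℝ) / (m + β / (1 - β - α * (1 - x)))) ^ m * Real.exp (-x)) =
      (γth / (α * γbar)) *
        ∑ j ∈ Finset.range m,
          ((m - 1).choose j : ℝ) * ((1 - β - α) / α) ^ (m - 1 - j) *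
            ∫ x in Set.Ioi (0 : ℝ),
              x ^ j * Real.exp (-x) *
                (x + (1 / α - β * ((m : ℝ) - 1) / (m * α) - 1)) ^ (-(m : ℤ)) := by
  obtain ⟨k, rfl⟩ := Nat.exists_eq_succ_of_ne_zero hm.ne'
  have hc : (0:ℝ) < (1 - β - α) / α := by
    apply div_pos (by linarith) hα
  set c : ℝ := (1 - β - α) / α with hc_def
  set z : ℝ := 1 / α - β * (((k+1 : ℕ) : ℝ) - 1) / (((k+1 : ℕ) : ℝ) * α) - 1 with hz_def
  have hm1 : ((k+1 : ℕ) : ℝ) = (k : ℝ) + 1 := by push_cast; ring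
  have hmpos : (0:ℝ) < (k : ℝ) + 1 := by positivity
  have hz : 0 < z := by
    have heq : z = ((((k:ℝ)+1) - β*k - ((k:ℝ)+1)*α)) / (((k:ℝ)+1)*α) := by
      rw [hz_def, hm1]; field_simp; ring
    rw [heq]
    have hk0 : (0:ℝ) ≤ (k:ℝ) * (1 - β - α) := mul_nonneg (Nat.cast_nonneg k) (by linarith)
    apply div_pos (by nlinarith) (by positivity)
  -- integrability of each term
  have hint : ∀ j : ℕ, IntegrableOn
      (fun x : ℝ => x ^ j * Real.exp (-x) * (x + z) ^ (-((k+1 : ℕ) : ℤ))) (Set.Ioi 0) := by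
    intro j
    have hbase : IntegrableOn (fun x : ℝ => Real.exp (-x) * x ^ ((((j:ℝ)+1)) - 1)) (Set.Ioi 0) :=
      Real.GammaIntegral_convergent (by positivity)
    have hmeas : AEStronglyMeasurable
        (fun x : ℝ => x ^ j * Real.exp (-x) * (x + z) ^ (-((k+1 : ℕ) : ℤ)))
        (volume.restrict (Set.Ioi 0)) := by
      apply ContinuousOn.aestronglyMeasurable _ measurableSet_Ioi
      apply ContinuousOn.mul
      · exact (continuousOn_pow j).mul (Real.continuous_exp.comp continuous_neg).continuousOn
      · apply ContinuousOn.zpow₀ (by fun_prop)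
        intro x hx
        exact Or.inl (by simp only [Set.mem_Ioi] at hx; positivity)
    refine Integrable.mono' ((hbase.const_mul (z ^ (-((k+1 : ℕ) : ℤ)))) ) hmeas ?_
    filter_upwards [ae_restrict_mem measurableSet_Ioi] with x hx
    simp only [Set.mem_Ioi] at hx
    have h1 : x ^ ((((j:ℝ)+1)) - 1) = x ^ j := by
      rw [add_sub_cancel_right, Real.rpow_natCast]
    rw [h1]
    have h2 : (x + z) ^ (-((k+1 : ℕ) : ℤ)) ≤ z ^ (-((k+1 : ℕ) : ℤ)) := by
      rw [zpow_neg, zpow_neg, zpow_natCast, zpow_natCast]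
      exact inv_anti₀ (by positivity) (pow_le_pow_left₀ hz.le (by linarith) _)
    calc ‖x ^ j * Real.exp (-x) * (x + z) ^ (-((k+1 : ℕ) : ℤ))‖
        = x ^ j * Real.exp (-x) * (x + z) ^ (-((k+1 : ℕ) : ℤ)) := by
          rw [Real.norm_eq_abs, abs_of_nonneg]; positivity
      _ ≤ x ^ j * Real.exp (-x) * z ^ (-((k+1 : ℕ) : ℤ)) := by
          apply mul_le_mul_of_nonneg_left h2 (by positivity)
      _ = z ^ (-((k+1 : ℕ) : ℤ)) * (Real.exp (-x) * x ^ j) := by ring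
  -- pointwise identity on Ioi 0
  have hpt : Set.EqOn
      (fun x : ℝ => (γth * (1 + β / (1 - β - α * (1 - x))) / (γbar * (1 - α * (1 - x)))) *
          (((k+1 : ℕ) : ℝ) / ((k+1 : ℕ) + β / (1 - β - α * (1 - x)))) ^ (k+1) * Real.exp (-x))
      (fun x : ℝ => (γth / (α * γbar)) * ∑ j ∈ Finset.range (k+1),
          (((k+1) - 1).choose j : ℝ) * c ^ ((k+1) - 1 - j) *
            (x ^ j * Real.exp (-x) * (x + z) ^ (-((k+1 : ℕ) : ℤ))))
      (Set.Ioi 0) := by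
    intro x hx
    simp only [Set.mem_Ioi] at hx
    have hxc : (0:ℝ) < x + c := by linarith
    have hxz : (0:ℝ) < x + z := by linarith
    have ha : 1 - β - α * (1 - x) = α * (x + c) := by
      rw [hc_def]; field_simp; ring
    have hb : 1 - α * (1 - x) = α * (x + c) + β := by
      rw [hc_def]; field_simp; ring
    have hd : (((k:ℝ)+1)) * (α * (x + c)) + β = (((k:ℝ)+1) * α) * (x + z) := by
      rw [hc_def, hz_def, hm1]; field_simp; ring
    have hapos : (0:ℝ) < α * (x + c) := by positivity
    have h5 : (((k+1 : ℕ) : ℝ)) + β / (α * (x + c)) =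
        ((((k+1 : ℕ) : ℝ)) * (α * (x + c)) + β) / (α * (x + c)) := by
      field_simp
    have hratio : (((k+1 : ℕ) : ℝ)) / (((k+1 : ℕ) : ℝ) + β / (α * (x + c))) = (x+c)/(x+z) := by
      rw [h5, div_div_eq_mul_div, hm1, hd, ← mul_assoc,
        mul_div_mul_left _ _ (by positivity : ((k:ℝ)+1) * α ≠ 0)]
    simp only [ha, hb, hratio]
    rw [div_pow, zpow_neg, zpow_natCast]
    have hbin : (∑ j ∈ Finset.range (k+1),
        (k.choose j : ℝ) * c ^ (k - j) *
          (x ^ j * Real.exp (-x) * ((x + z) ^ (k+1))⁻¹))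
        = (x + c) ^ k * (Real.exp (-x) * ((x + z) ^ (k+1))⁻¹) := by
      rw [add_pow x c k, Finset.sum_mul]
      exact Finset.sum_congr rfl fun j hj => by ring
    simp only [Nat.add_sub_cancel]
    rw [hbin]
    have hab : (0:ℝ) < α * (x + c) + β := by positivity
    field_simp
    ring
  rw [MeasureTheory.setIntegral_congr_fun measurableSet_Ioi hpt]
  rw [MeasureTheory.integral_const_mul]
  congr 1
  rw [MeasureTheory.integral_finset_sum _ (fun j _ => ((hint j).const_mul _))]
  exact Finset.sum_congr rfl fun j _ => MeasureTheory.integral_const_mul _ _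
end
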